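/- Let n > 5 be an odd integer such that d := n(n−4) is squarefree. Then u := (n − 2 − √d)/2 is a unit in the ring of integers of the real quadratic field K = ℚ(√d), and u is a fundamental unit: every unit of the ring of integers of K equals ± u^m for some integer m. -/

import Mathlib

set_option maxHeartbeats 1000000

open NumberField

open Polynomial in
private lemma aux_mem_adjoin {s : ℝ} {c : ℚ} (hs : s * s = (c : ℝ)) {x : ℝ}
    (hx : x ∈ Algebra.adjoin ℚ {s}) : ∃ a b : ℚ, x = a + b * s := by
  let A : Subalgebra ℚ ℝ :=
  { carrier := {x | ∃ a b : ℚ, x = a + b * s}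
    add_mem' := by
      rintro x y ⟨a, b, rfl⟩ ⟨a', b', rfl⟩
      exact ⟨a + a', b + b', by push_cast; ring⟩
    mul_mem' := by
      rintro x y ⟨a, b, rfl⟩ ⟨a', b', rfl⟩
      refine ⟨a * a' + b * b' * c, a * b' + b * a', ?_⟩
      push_cast
      have expand : ((a:ℝ) + b * s) * (a' + b' * s)
          = a*a' + b*b'*(s*s) + (a*b' + b*a')*s := by ring
      rw [expand, hs]
    algebraMap_mem' := fun r => ⟨r, 0, by simp⟩ }
  have : Algebra.adjoin ℚ {s} ≤ A := Algebra.adjoin_le (by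
    rintro y rfl
    exact ⟨0, 1, by push_cast; ring⟩)
  exact this hx

private lemma aux_unique {s : ℝ} (hirr : Irrational s) {a b a' b' : ℚ}
    (h : (a : ℝ) + b * s = a' + b' * s) : a = a' ∧ b = b' := by
  have hb : b = b' := by
    by_contra hbb
    apply hirr
    refine ⟨(a' - a) / (b - b'), ?_⟩
    have hne : ((b : ℝ) - b') ≠ 0 := by
      simpa [sub_eq_zero] using fun hh => hbb (by exact_mod_cast hh)
    push_cast
    field_simp
    linarith [h]
  refine ⟨?_, hb⟩
  have : (a : ℝ) = a' := by rw [hb] at h; linarith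
  exact_mod_cast this

private lemma aux_den_one {q : ℚ} {d : ℕ} (hd : Squarefree d) {z : ℤ}
    (h : (z : ℚ) = q ^ 2 * d) : ∃ m : ℤ, (m : ℚ) = q := by
  refine ⟨q.num, ?_⟩
  suffices hden : q.den = 1 by
    conv_rhs => rw [← Rat.num_div_den q]
    rw [hden]; push_cast; ring
  have key : (q.den : ℤ) * q.den ∣ d * (q.num * q.num) := by
    refine ⟨z, ?_⟩
    have h2 := h
    rw [← Rat.num_div_den q] at h2
    have hden0 : (q.den : ℚ) ≠ 0 := by exact_mod_cast q.den_nz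
    field_simp at h2
    exact_mod_cast (by push_cast; linarith :
      ((d : ℤ) * (q.num * q.num) : ℚ) = ((q.den : ℤ) * q.den * z : ℚ))
  have c : (q.den).Coprime q.num.natAbs := q.reduced.symm
  have c2 : (q.den * q.den).Coprime q.num.natAbs := c.mul c
  have hcop : (q.den * q.den).Coprime (q.num.natAbs * q.num.natAbs) := c2.mul_right c2
  have keyn : q.den * q.den ∣ d * (q.num.natAbs * q.num.natAbs) := by
    have := Int.natAbs_dvd_natAbs.mpr key
    simpa [Int.natAbs_mul] using this
  have hdvd : q.den * q.den ∣ d := (Nat.Coprime.dvd_of_dvd_mul_right hcop keyn)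
  exact Nat.isUnit_iff.mp (hd q.den hdvd)

open Polynomial in
private lemma aux_conj {s : ℝ} {c : ℚ} (hs : s * s = (c : ℝ)) (hirr : Irrational s) {a b : ℚ}
    (hint : IsIntegral ℤ ((a : ℝ) + b * s)) : IsIntegral ℤ ((a : ℝ) - b * s) := by
  obtain ⟨f, hf, hroot⟩ := hint
  refine ⟨f, hf, ?_⟩
  have main : ∀ g : ℤ[X], ∃ A B : ℚ,
      eval₂ (algebraMap ℤ ℝ) ((a : ℝ) + b * s) g = A + B * s ∧
      eval₂ (algebraMap ℤ ℝ) ((a : ℝ) - b * s) g = A - B * s := by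
    intro g
    induction g using Polynomial.induction_on with
    | C r =>
        refine ⟨r, 0, ?_, ?_⟩ <;>
        · show ((eval₂ (algebraMap ℤ ℝ) _ (C r) : ℝ)) = _
          rw [eval₂_C, eq_intCast]
          push_cast; ring
    | add p q hp hq =>
        obtain ⟨A, B, h1, h2⟩ := hp
        obtain ⟨A', B', h3, h4⟩ := hq
        exact ⟨A + A', B + B', by rw [eval₂_add, h1, h3]; push_cast; ring,
          by rw [eval₂_add, h2, h4]; push_cast; ring⟩
    | monomial k r hk =>
        obtain ⟨A, B, h1, h2⟩ := hk
        refine ⟨A * a + B * b * c, A * b + B * a, ?_, ?_⟩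
        · have : eval₂ (algebraMap ℤ ℝ) ((a : ℝ) + b * s) (C r * X ^ (k + 1))
              = eval₂ (algebraMap ℤ ℝ) ((a : ℝ) + b * s) (C r * X ^ k) * ((a : ℝ) + b * s) := by
            simp [pow_succ, mul_assoc]
          rw [this, h1]
          push_cast
          have expand : ((A:ℝ) + B * s) * (a + b * s)
              = A*a + B*b*(s*s) + (A*b + B*a)*s := by ring
          rw [expand, hs]
        · have : eval₂ (algebraMap ℤ ℝ) ((a : ℝ) - b * s) (C r * X ^ (k + 1))
              = eval₂ (algebraMap ℤ ℝ) ((a : ℝ) - b * s) (C r * X ^ k) * ((a : ℝ) - b * s) := by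
            simp [pow_succ, mul_assoc]
          rw [this, h2]
          push_cast
          have expand : ((A:ℝ) - B * s) * (a - b * s)
              = A*a + B*b*(s*s) - (A*b + B*a)*s := by ring
          rw [expand, hs]
  obtain ⟨A, B, h1, h2⟩ := main f
  rw [h1] at hroot
  have h0 : (A : ℝ) + B * s = (0 : ℚ) + (0 : ℚ) * s := by rw [hroot]; push_cast; ring
  obtain ⟨hA, hB⟩ := aux_unique hirr h0
  rw [h2, hA, hB]; push_cast; ring

private lemma aux_coords {s : ℝ} {d : ℕ} (hs : s * s = (d : ℝ)) (hirr : Irrational s)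
    {a b : ℚ} (hint : IsIntegral ℤ ((a : ℝ) + b * s)) :
    ∃ p N : ℤ, (p : ℚ) = 2 * a ∧ (N : ℚ) = a ^ 2 - d * b ^ 2 := by
  have hs' : s * s = ((d : ℚ) : ℝ) := by push_cast; exact hs
  have hconj := aux_conj hs' hirr hint
  have hsum : IsIntegral ℤ ((((2 * a : ℚ)) : ℝ)) := by
    have e : ((((2 * a : ℚ)) : ℝ)) = ((a : ℝ) + b * s) + ((a : ℝ) - b * s) := by
      push_cast; ring
    rw [e]; exact hint.add hconj
  have hprod : IsIntegral ℤ ((((a ^ 2 - d * b ^ 2 : ℚ)) : ℝ)) := by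
    have e : ((((a ^ 2 - d * b ^ 2 : ℚ)) : ℝ)) = ((a : ℝ) + b * s) * ((a : ℝ) - b * s) := by
      have expand : ((a : ℝ) + b * s) * (a - b * s) = a^2 - b^2 * (s*s) := by ring
      rw [expand, hs]
      push_cast; ring
    rw [e]; exact hint.mul hconj
  have inj : Function.Injective (algebraMap ℚ ℝ) := (algebraMap ℚ ℝ).injective
  obtain ⟨p, hp⟩ := IsIntegrallyClosed.isIntegral_iff.mp
    ((isIntegral_algebraMap_iff inj).mp hsum)
  obtain ⟨N, hN⟩ := IsIntegrallyClosed.isIntegral_iff.mp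
    ((isIntegral_algebraMap_iff inj).mp hprod)
  exact ⟨p, N, by exact_mod_cast hp, by exact_mod_cast hN⟩

/-- For odd `n > 5` with `n(n−4)` squarefree, `u = (n − 2 − √(n(n−4)))/2` is a
fundamental unit of the real quadratic field `ℚ(√(n(n−4)))`. -/
theorem stmt4 (n : ℕ) (hn : 5 < n) (hodd : Odd n)
    (hsf : Squarefree (n * (n - 4)))
    (K : IntermediateField ℚ ℝ)
    (hK : K = IntermediateField.adjoin ℚ {Real.sqrt ((n * (n - 4) : ℕ) : ℝ)}) :
    ∃ u : (𝓞 K)ˣ,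
      (((u : 𝓞 K) : K) : ℝ) = ((n : ℝ) - 2 - Real.sqrt ((n * (n - 4) : ℕ) : ℝ)) / 2 ∧
      ∀ v : (𝓞 K)ˣ, ∃ m : ℤ, v = u ^ m ∨ v = -u ^ m := by
  subst hK
  obtain ⟨k, hk⟩ := hodd
  have h7 : 7 ≤ n := by omega
  have h4 : 4 ≤ n := by omega
  set D : ℕ := n * (n - 4) with hDdef
  set s : ℝ := Real.sqrt ((D : ℕ) : ℝ) with hsdef
  set K : IntermediateField ℚ ℝ := IntermediateField.adjoin ℚ {s} with hKdef
  have hnR : (7:ℝ) ≤ (n:ℝ) := by exact_mod_cast h7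
  have hDcast : ((D : ℕ) : ℝ) = ((n:ℝ) - 2)^2 - 4 := by
    rw [hDdef, Nat.cast_mul, Nat.cast_sub h4]
    push_cast; ring
  have hD21 : 21 ≤ D := by
    calc 21 = 7 * 3 := by norm_num
    _ ≤ n * (n - 4) := Nat.mul_le_mul (by omega) (by omega)
  have hs2 : s * s = ((D:ℕ) : ℝ) := Real.mul_self_sqrt (by positivity)
  have hnotsq : ¬ IsSquare D := by
    rintro ⟨r, hr⟩
    have : IsUnit r := hsf r (by rw [hr])
    have hr1 : r = 1 := Nat.isUnit_iff.mp this
    rw [hr1] at hr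
    omega
  have hirr : Irrational s := irrational_sqrt_natCast_iff.mpr hnotsq
  have hDpos : (0:ℝ) < ((D:ℕ):ℝ) := by
    have : (21:ℝ) ≤ ((D:ℕ):ℝ) := by exact_mod_cast hD21
    linarith
  have hs_pos : 0 < s := Real.sqrt_pos.mpr hDpos
  have hsn2 : s < (n:ℝ) - 2 := by
    have h1 : ((D:ℕ):ℝ) < ((n:ℝ)-2)^2 := by rw [hDcast]; linarith
    calc s < Real.sqrt (((n:ℝ)-2)^2) := Real.sqrt_lt_sqrt (le_of_lt hDpos) h1
    _ = (n:ℝ) - 2 := Real.sqrt_sq (by linarith)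
  have hsn3 : (n:ℝ) - 3 < s := by
    have h1 : ((n:ℝ)-3)^2 < ((D:ℕ):ℝ) := by rw [hDcast]; nlinarith
    calc (n:ℝ) - 3 = Real.sqrt (((n:ℝ)-3)^2) := (Real.sqrt_sq (by linarith)).symm
    _ < s := Real.sqrt_lt_sqrt (by positivity) h1
  have hs4 : 4 < s := by linarith
  have hsK : s ∈ K := by rw [hKdef]; exact IntermediateField.subset_adjoin ℚ {s} rfl
  have hnK : ((n:ℝ)) ∈ K := by exact_mod_cast K.natCast_mem n
  have h2K : ((2:ℝ)) ∈ K := by exact_mod_cast K.natCast_mem 2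
  set uR : ℝ := ((n : ℝ) - 2 - s) / 2 with huRdef
  set eR : ℝ := ((n : ℝ) - 2 + s) / 2 with heRdef
  have humem : uR ∈ K := K.div_mem (K.sub_mem (K.sub_mem hnK h2K) hsK) h2K
  have hemem : eR ∈ K := K.div_mem (K.add_mem (K.sub_mem hnK h2K) hsK) h2K
  have hue : uR * eR = 1 := by
    have expand : uR * eR = (((n:ℝ)-2)^2 - s*s)/4 := by rw [huRdef, heRdef]; ring
    rw [expand, hs2, hDcast]; ring
  have heR1 : 1 < eR := by rw [heRdef]; linarith
  have heRpos : 0 < eR := by linarith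
  clear_value D s
  -- integrality of uR and eR
  have hqu : uR^2 - ((n:ℝ)-2)*uR + 1 = 0 := by
    have h1 : uR^2 - ((n:ℝ)-2)*uR + 1 = ((s*s) - (((n:ℝ)-2)^2 - 4))/4 := by
      rw [huRdef]; ring
    rw [h1, hs2, hDcast]; ring
  have hqe : eR^2 - ((n:ℝ)-2)*eR + 1 = 0 := by
    have h1 : eR^2 - ((n:ℝ)-2)*eR + 1 = ((s*s) - (((n:ℝ)-2)^2 - 4))/4 := by
      rw [heRdef]; ring
    rw [h1, hs2, hDcast]; ring
  have hmonic : (Polynomial.X^2 - Polynomial.C ((n:ℤ)-2) * Polynomial.X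
      + Polynomial.C 1 : Polynomial ℤ).Monic := by
    monicity!
  have heval : ∀ x : ℝ, x^2 - ((n:ℝ)-2)*x + 1 = 0 →
      Polynomial.eval₂ (algebraMap ℤ ℝ) x
        (Polynomial.X^2 - Polynomial.C ((n:ℤ)-2) * Polynomial.X + Polynomial.C 1) = 0 := by
    intro x hx
    simp only [Polynomial.eval₂_add, Polynomial.eval₂_sub, Polynomial.eval₂_mul,
      Polynomial.eval₂_pow, Polynomial.eval₂_X, Polynomial.eval₂_C]
    simp only [eq_intCast]
    push_cast
    linarith [hx]
  have huint : IsIntegral ℤ uR := ⟨_, hmonic, heval uR hqu⟩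
  have heint : IsIntegral ℤ eR := ⟨_, hmonic, heval eR hqe⟩
  -- lift to the ring of integers
  have hliftint : ∀ (x : ℝ) (hx : x ∈ K), IsIntegral ℤ x → IsIntegral ℤ (⟨x, hx⟩ : K) := by
    intro x hx hint
    rw [← isIntegral_algebraMap_iff (A := K) (B := ℝ) ((algebraMap K ℝ).injective)]
    exact hint
  set uO : 𝓞 K := ⟨⟨uR, humem⟩, hliftint uR humem huint⟩ with huO
  set eO : 𝓞 K := ⟨⟨eR, hemem⟩, hliftint eR hemem heint⟩ with heO
  set φ : (𝓞 K) →+* ℝ := (algebraMap K ℝ).comp (algebraMap (𝓞 K) K) with hφdef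
  have hφinj : Function.Injective φ :=
    Subtype.coe_injective.comp RingOfIntegers.coe_injective
  have hφu : φ uO = uR := rfl
  have hφe : φ eO = eR := rfl
  have hUmul : uO * eO = 1 := by
    apply hφinj
    rw [map_mul, map_one, hφu, hφe, hue]
  have hUmul' : eO * uO = 1 := by rw [mul_comm]; exact hUmul
  set U : (𝓞 K)ˣ := ⟨uO, eO, hUmul, hUmul'⟩ with hUdef
  refine ⟨U, rfl, ?_⟩
  -- representation of integral elements
  have hsint : IsIntegral ℚ s := by
    refine ⟨Polynomial.X^2 - Polynomial.C ((D:ℚ)), Polynomial.monic_X_pow_sub_C _ two_ne_zero, ?_⟩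
    simp only [Polynomial.eval₂_sub, Polynomial.eval₂_pow, Polynomial.eval₂_X,
      Polynomial.eval₂_C, eq_ratCast]
    push_cast
    nlinarith [hs2]
  have hadj : K.toSubalgebra = Algebra.adjoin ℚ {s} :=
    IntermediateField.adjoin_simple_toSubalgebra_of_isAlgebraic hsint.isAlgebraic
  have hs2' : s * s = (((D:ℚ)) : ℝ) := by push_cast; exact hs2
  have repr : ∀ w : (𝓞 K)ˣ, ∃ a b : ℚ,
      φ ↑w = (a:ℝ) + b * s ∧ IsIntegral ℤ ((a:ℝ) + b * s) := by
    intro w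
    have hmem : φ ↑w ∈ Algebra.adjoin ℚ {s} := by
      rw [← hadj]
      exact ((w : 𝓞 K) : K).2
    obtain ⟨a, b, hab⟩ := aux_mem_adjoin hs2' hmem
    have hint : IsIntegral ℤ (φ ↑w) := by
      have h1 := RingOfIntegers.isIntegral_coe (w : 𝓞 K)
      rw [← isIntegral_algebraMap_iff (A := K) (B := ℝ)
        ((algebraMap K ℝ).injective)] at h1
      exact h1
    exact ⟨a, b, hab, hab ▸ hint⟩
  -- the key minimality estimate
  have key : ∀ w : (𝓞 K)ˣ, 1 < φ ↑w → eR ≤ φ ↑w := by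
    intro w hw1
    obtain ⟨a, b, hab, hint⟩ := repr w
    obtain ⟨a', b', hab', hint'⟩ := repr w⁻¹
    have hxy : ((a:ℝ) + b * s) * ((a':ℝ) + b' * s) = 1 := by
      rw [← hab, ← hab', ← map_mul, ← Units.val_mul, mul_inv_cancel, Units.val_one, map_one]
    have hprod : ((a*a' + D*b*b' : ℚ) : ℝ) + ((a*b' + b*a' : ℚ)) * s
        = ((1:ℚ):ℝ) + ((0:ℚ)) * s := by
      push_cast
      have expand : ((a:ℝ)+b*s)*((a':ℝ)+b'*s)
          = (a*a' + (D:ℝ)*(b*b')) + (a*b'+b*a')*s + b*b'*((s*s) - (D:ℝ)) := by ring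
      rw [expand, hs2] at hxy
      linarith only [hxy]
    obtain ⟨h1, h2⟩ := aux_unique hirr hprod
    obtain ⟨p, N, hp, hN⟩ := aux_coords hs2 hirr hint
    obtain ⟨p', N', hp', hN'⟩ := aux_coords hs2 hirr hint'
    obtain ⟨q, hq⟩ := aux_den_one (q := 2*b) (d := D) hsf (z := p^2 - 4*N) (by
      push_cast
      linear_combination (p+2*(a:ℚ))*hp - 4*hN)
    have hNN' : N * N' = 1 := by
      have : ((N:ℚ)) * ((N':ℚ)) = 1 := by
        rw [hN, hN']
        linear_combination ((a:ℚ)*a' + D*b*b' + 1) * h1 - (D:ℚ)*((a:ℚ)*b' + b*a') * h2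
      exact_mod_cast this
    have hNcase : N = 1 ∨ N = -1 := Int.isUnit_iff.mp (IsUnit.of_mul_eq_one N' hNN')
    -- conjugate bounds
    have hconjval : ((a:ℝ) + b * s) * ((a:ℝ) - b * s) = (N:ℝ) := by
      have expand : ((a:ℝ) + b * s) * ((a:ℝ) - b * s)
          = (a:ℝ)^2 - (D:ℝ)*(b:ℝ)^2 - b^2*((s*s) - (D:ℝ)) := by ring
      rw [expand, hs2]
      have hNc : ((N:ℤ):ℝ) = ((a:ℝ)^2 - (D:ℝ)*(b:ℝ)^2) := by exact_mod_cast hN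
      linarith only [hNc]
    rw [hab] at hw1
    have hNabs : (-1:ℝ) ≤ (N:ℝ) ∧ (N:ℝ) ≤ 1 := by
      rcases hNcase with h | h <;> rw [h] <;> norm_num
    have hconj_lt : (a:ℝ) - b * s < 1 := by
      nlinarith only [hw1, hconjval, hNabs.2]
    have hconj_gt : (-1:ℝ) < (a:ℝ) - b * s := by
      nlinarith only [hw1, hconjval, hNabs.1]
    -- positivity of p and q
    have hpR : (p:ℝ) = ((a:ℝ) + b*s) + ((a:ℝ) - b*s) := by
      have hpc : ((p:ℤ):ℝ) = 2*(a:ℝ) := by exact_mod_cast hp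
      linarith only [hpc]
    have hqR : (q:ℝ) * s = ((a:ℝ) + b*s) - ((a:ℝ) - b*s) := by
      have hqc : ((q:ℤ):ℝ) = 2*(b:ℝ) := by exact_mod_cast hq
      linear_combination s * hqc
    have hp1 : 1 ≤ p := by
      have hp0 : (0:ℝ) < (p:ℝ) := by rw [hpR]; linarith only [hconj_gt, hw1]
      have : (0:ℤ) < p := by exact_mod_cast hp0
      omega
    have hq1 : 1 ≤ q := by
      have hqpos : (0:ℝ) < (q:ℝ) := by
        have h0 : (0:ℝ) < (q:ℝ) * s := by rw [hqR]; linarith only [hconj_lt, hw1]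
        by_contra hle
        push_neg at hle
        nlinarith only [h0, hs_pos, mul_nonneg (neg_nonneg.mpr hle) (le_of_lt hs_pos)]
      have : (0:ℤ) < q := by exact_mod_cast hqpos
      omega
    -- the Pell-type equation
    have hpqN : p^2 - (D:ℤ)*q^2 = 4*N := by
      have : ((p:ℚ))^2 - (D:ℚ)*((q:ℚ))^2 = 4*(N:ℚ) := by
        rw [hq]
        linear_combination ((p:ℚ)+2*a)*hp - 4*hN
      exact_mod_cast this
    have hxval : ((a:ℝ) + b * s) = (p:ℝ)/2 + ((q:ℝ)/2) * s := by
      have h1 : ((p:ℤ):ℝ) = 2*(a:ℝ) := by exact_mod_cast hp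
      have h2 : ((q:ℤ):ℝ) = 2*(b:ℝ) := by exact_mod_cast hq
      linear_combination (-1/2 : ℝ) * h1 - (s/2) * h2
    have hDZ : (D:ℤ) = (n:ℤ)*((n:ℤ)-4) := by
      rw [hDdef]
      push_cast [Nat.cast_sub h4]
      ring
    have hnZ : (7:ℤ) ≤ (n:ℤ) := by exact_mod_cast h7
    rw [hab, hxval]
    rcases eq_or_lt_of_le hq1 with hqone | hq2
    · -- q = 1
      have hqone' : q = 1 := hqone.symm
      have hNbd : (-1:ℤ) ≤ N ∧ N ≤ 1 := by rcases hNcase with h | h <;> rw [h] <;> norm_num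
      have hps : (n:ℤ) - 2 ≤ p := by
        by_contra hcon
        push_neg at hcon
        have hple : p ≤ (n:ℤ) - 3 := by omega
        rw [hqone'] at hpqN
        nlinarith only [hpqN, hDZ, hnZ, hp1, hNbd.1, hNbd.2,
          mul_nonneg (by linarith only [hple] : (0:ℤ) ≤ (n:ℤ)-3-p)
            (by linarith only [hple, hp1] : (0:ℤ) ≤ (n:ℤ)-3+p)]
      have hpsR : ((n:ℝ) - 2) ≤ (p:ℝ) := by exact_mod_cast hps
      have hqoneR : ((q:ℤ):ℝ) = 1 := by exact_mod_cast hqone'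
      rw [heRdef, hqoneR]
      linarith only [hpsR, hs_pos]
    · -- 2 ≤ q
      have h2q : (2:ℝ) ≤ (q:ℝ) := by exact_mod_cast hq2
      have hp1R : (1:ℝ) ≤ (p:ℝ) := by exact_mod_cast hp1
      rw [heRdef]
      linarith only [mul_nonneg (by linarith only [h2q] : (0:ℝ) ≤ (q:ℝ)-2) (le_of_lt hs_pos),
        hsn3, hp1R]
  -- final descent
  intro v
  set ψ : (𝓞 K)ˣ →* ℝˣ := Units.map φ.toMonoidHom with hψdef
  have hψval : ∀ w : (𝓞 K)ˣ, ((ψ w : ℝˣ) : ℝ) = φ ↑w := fun w => rfl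
  have hφv0 : φ ↑v ≠ 0 := by
    have := (ψ v).ne_zero
    rwa [hψval] at this
  have hφneg : ∀ w : (𝓞 K)ˣ, φ ↑(-w) = - φ ↑w := by
    intro w
    rw [Units.val_neg, map_neg]
  obtain ⟨w, hwv, hwpos⟩ : ∃ w : (𝓞 K)ˣ, (w = v ∨ w = -v) ∧ 0 < φ ↑w := by
    rcases lt_or_gt_of_ne hφv0 with hneg | hpos
    · exact ⟨-v, Or.inr rfl, by rw [hφneg]; linarith⟩
    · exact ⟨v, Or.inl rfl, hpos⟩
  obtain ⟨m, hm1, hm2⟩ := exists_mem_Ico_zpow hwpos heR1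
  have huRinv : uR = eR⁻¹ := eq_inv_of_mul_eq_one_left hue
  set W : (𝓞 K)ˣ := w * U ^ m with hWdef
  have hφW : φ ↑W = φ ↑w * eR^(-m) := by
    rw [hWdef, Units.val_mul, map_mul]
    congr 1
    have h1 : φ ↑(U ^ m) = ((ψ (U ^ m) : ℝˣ) : ℝ) := rfl
    rw [h1, map_zpow, Units.val_zpow_eq_zpow_val]
    have h2 : ((ψ U : ℝˣ) : ℝ) = uR := rfl
    rw [h2, huRinv, inv_zpow, ← zpow_neg]
  have heRz : eR ≠ 0 := ne_of_gt heRpos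
  have hW1le : 1 ≤ φ ↑W := by
    rw [hφW]
    calc (1:ℝ) = eR^m * eR^(-m) := by
          rw [← zpow_add₀ heRz]; simp
    _ ≤ φ ↑w * eR^(-m) :=
          mul_le_mul_of_nonneg_right hm1 (le_of_lt (zpow_pos heRpos _))
  have hWlt : φ ↑W < eR := by
    rw [hφW]
    calc φ ↑w * eR^(-m) < eR^(m+1) * eR^(-m) :=
          mul_lt_mul_of_pos_right hm2 (zpow_pos heRpos _)
    _ = eR := by rw [← zpow_add₀ heRz]; simp
  have hWone : W = 1 := by
    rcases eq_or_lt_of_le hW1le with h | h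
    · apply Units.ext
      apply hφinj
      rw [Units.val_one, map_one]
      exact h.symm
    · exact absurd (key W h) (not_le.mpr hWlt)
  have hwU : w = U ^ (-m) := by
    rw [zpow_neg]
    exact eq_inv_of_mul_eq_one_left (hWdef.symm.trans hWone)
  rcases hwv with rfl | hvw
  · exact ⟨-m, Or.inl hwU⟩
  · refine ⟨-m, Or.inr ?_⟩
    rw [← hwU, hvw, neg_neg]
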